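/- Let K be a differential field of characteristic 0 with field of constants C, L|K a Picard-Vessiot extension, C̄ an algebraic closure of C, and L̄ = L·C̄, K̄ = K·C̄. If E is an intermediate differential field of L|K such that E|K is a Picard-Vessiot extension, then Ē = E·C̄ is a Picard-Vessiot extension of K̄. -/

import Mathlib

/-!
Common setup: differential fields realized as subfields of an ambient field `M`
of characteristic zero equipped with a derivation `D`.
-/

namespace PVGalois

variable {M : Type*} [Field M]

/-- `D` is a derivation on the field `M`. -/
structure IsDerivation (D : M → M) : Prop where
  map_add : ∀ a b : M, D (a + b) = D a + D b
  leibniz : ∀ a b : M, D (a * b) = a * D b + D a * b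

/-- A subfield `F` of `M` is a differential subfield if it is closed under `D`. -/
def DiffClosed (D : M → M) (F : Subfield M) : Prop :=
  ∀ x ∈ F, D x ∈ F

/-- The set of constants of the differential subfield `F`. -/
def constantsOf (D : M → M) (F : Subfield M) : Set M :=
  {x | x ∈ F ∧ D x = 0}

/-- `L` is differentially generated over `K` by the set `S`:
`L` is the smallest differential subfield containing `K` and `S`. -/
def IsDiffGenBy (D : M → M) (K : Subfield M) (S : Set M) (L : Subfield M) : Prop :=
  K ≤ L ∧ S ⊆ (L : Set M) ∧ DiffClosed D L ∧
    ∀ F : Subfield M, K ≤ F → S ⊆ (F : Set M) → DiffClosed D F → L ≤ F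

/-- `y` is a solution of the homogeneous linear differential equation
`Y⁽ⁿ⁾ + a_{n-1} Y⁽ⁿ⁻¹⁾ + ⋯ + a_1 Y' + a_0 Y = 0`. -/
def IsSolution (D : M → M) (n : ℕ) (a : Fin n → M) (y : M) : Prop :=
  D^[n] y + ∑ i : Fin n, a i * D^[(i : ℕ)] y = 0

/-- A family `v` is linearly independent over the set of scalars `A ⊆ M`. -/
def LinIndepOver {ι : Type*} (A : Set M) (v : ι → M) : Prop :=
  ∀ (s : Finset ι) (c : ι → M), (∀ i, c i ∈ A) →
    ∑ i ∈ s, c i * v i = 0 → ∀ i ∈ s, c i = 0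

/-- Every element of `T` is a finite linear combination of the family `v`
with coefficients in `A`. -/
def SpansOver {ι : Type*} (A : Set M) (v : ι → M) (T : Set M) : Prop :=
  ∀ x ∈ T, ∃ (s : Finset ι) (c : ι → M), (∀ i, c i ∈ A) ∧ x = ∑ i ∈ s, c i * v i

/-- `Cb` is an algebraic closure of the set `C` inside `M`:
it contains `C`, is algebraic over `C`, and is algebraically closed. -/
def IsAlgClosureOf (C : Set M) (Cb : Subfield M) : Prop :=
  C ⊆ (Cb : Set M) ∧
  (∀ x ∈ Cb, ∃ p : Polynomial M, p ≠ 0 ∧ (∀ k, p.coeff k ∈ C) ∧ p.eval x = 0) ∧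
  (∀ p : Polynomial M, 0 < p.degree → (∀ k, p.coeff k ∈ Cb) → ∃ x ∈ Cb, p.eval x = 0)

/-- `L|K` is a Picard-Vessiot extension for the equation with coefficients `a`,
with fundamental system of solutions `η`. -/
def IsPicardVessiotWith (D : M → M) (K L : Subfield M) (n : ℕ) (a : Fin n → M)
    (η : Fin n → M) : Prop :=
  (∀ i, a i ∈ K) ∧ (∀ j, IsSolution D n a (η j)) ∧
  LinIndepOver (constantsOf D L) η ∧
  IsDiffGenBy D K (Set.range η) L ∧
  constantsOf D L = constantsOf D K

/-- `L|K` is a Picard-Vessiot extension for the equation with coefficients `a`. -/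
def IsPicardVessiot (D : M → M) (K L : Subfield M) (n : ℕ) (a : Fin n → M) : Prop :=
  ∃ η : Fin n → M, IsPicardVessiotWith D K L n a η

/-- A `K`-differential morphism from `L` into `Lb`: a ring homomorphism defined on `L`
with values in `Lb`, fixing `K` pointwise and commuting with the derivation `D`. -/
def IsDiffHom (D : M → M) (K L Lb : Subfield M) (σ : ↥L →+* M) : Prop :=
  (∀ x, σ x ∈ Lb) ∧ (∀ x : ↥L, (x : M) ∈ K → σ x = (x : M)) ∧
  ∀ (x : M) (hx : x ∈ L) (hx' : D x ∈ L), σ ⟨D x, hx'⟩ = D (σ ⟨x, hx⟩)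

/-- A `Kb`-differential automorphism of `Lb`: a `Kb`-differential morphism of `Lb`
into itself which is onto `Lb`. -/
def IsDiffAut (D : M → M) (Kb Lb : Subfield M) (τ : ↥Lb →+* M) : Prop :=
  IsDiffHom D Kb Lb Lb τ ∧ ∀ y ∈ Lb, ∃ x : ↥Lb, τ x = y

end PVGalois

open PVGalois

open PVGalois Polynomial Finset

namespace PVProof

variable {M : Type*} [Field M] {D : M → M}

lemma D_zero (hD : IsDerivation D) : D 0 = 0 := by
  have h := hD.map_add 0 0
  simp only [add_zero] at h
  exact (add_eq_left).mp h.symm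

lemma D_one (hD : IsDerivation D) : D 1 = 0 := by
  have h := hD.leibniz 1 1
  simp only [mul_one, one_mul] at h
  exact (add_eq_left).mp h.symm

lemma D_neg (hD : IsDerivation D) (x : M) : D (-x) = -D x := by
  have h := hD.map_add x (-x)
  simp only [add_neg_cancel, D_zero hD] at h
  linear_combination -h

lemma D_sum (hD : IsDerivation D) {ι : Type*} (s : Finset ι) (f : ι → M) :
    D (∑ i ∈ s, f i) = ∑ i ∈ s, D (f i) := by
  classical
  induction s using Finset.induction_on with
  | empty => simpa using D_zero hD
  | insert a s' hx ih =>
                    rw [Finset.sum_insert hx, Finset.sum_insert hx, hD.map_add, ih]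

lemma D_natCast (hD : IsDerivation D) (n : ℕ) : D (n : M) = 0 := by
  induction n with
  | zero => simpa using D_zero hD
  | succ k ih => push_cast; rw [hD.map_add, ih, D_one hD, add_zero]

lemma D_pow (hD : IsDerivation D) (x : M) (k : ℕ) :
    D (x ^ (k + 1)) = ((k : M) + 1) * x ^ k * D x := by
  induction k with
  | zero => simp
  | succ k ih =>
    have : x ^ (k + 2) = x * x ^ (k + 1) := by ring
    rw [this, hD.leibniz, ih]
    push_cast
    ring

lemma D_inv (hD : IsDerivation D) {x : M} (hx : x ≠ 0) :
    D x⁻¹ = -(D x * (x⁻¹ * x⁻¹)) := by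
  have h := hD.leibniz x x⁻¹
  rw [mul_inv_cancel₀ hx, D_one hD] at h
  have hx' : x * D x⁻¹ = -(D x * x⁻¹) := by linear_combination -h
  have := congrArg (fun y => x⁻¹ * y) hx'
  rw [← mul_assoc, inv_mul_cancel₀ hx, one_mul] at this
  rw [this]; ring

lemma iterate_mem {F : Subfield M} (hF : DiffClosed D F) {x : M} (hx : x ∈ F) (j : ℕ) :
    D^[j] x ∈ F := by
  induction j with
  | zero => simpa using hx
  | succ k ih => rw [Function.iterate_succ_apply']; exact hF _ ih

/-- The subfield of elements of `F` whose derivative is in `F`. -/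
def diffStab (D : M → M) (hD : IsDerivation D) (F : Subfield M) : Subfield M where
  carrier := {x | x ∈ F ∧ D x ∈ F}
  zero_mem' := ⟨F.zero_mem, by rw [D_zero hD]; exact F.zero_mem⟩
  one_mem' := ⟨F.one_mem, by rw [D_one hD]; exact F.zero_mem⟩
  add_mem' := fun ha hb => ⟨F.add_mem ha.1 hb.1, by
    rw [hD.map_add]; exact F.add_mem ha.2 hb.2⟩
  mul_mem' := fun {a b} ha hb => ⟨F.mul_mem ha.1 hb.1, by
    rw [hD.leibniz]; exact F.add_mem (F.mul_mem ha.1 hb.2) (F.mul_mem ha.2 hb.1)⟩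
  neg_mem' := fun {a} ha => ⟨F.neg_mem ha.1, by rw [D_neg hD]; exact F.neg_mem ha.2⟩
  inv_mem' := fun a ha => by
    by_cases h : a = 0
    · subst h; rw [inv_zero]; exact ⟨F.zero_mem, by rw [D_zero hD]; exact F.zero_mem⟩
    · exact ⟨F.inv_mem ha.1, by
        rw [D_inv hD h]
        exact F.neg_mem (F.mul_mem ha.2 (F.mul_mem (F.inv_mem ha.1) (F.inv_mem ha.1)))⟩

lemma diffClosed_sup (hD : IsDerivation D) {F₁ F₂ : Subfield M}
    (h1 : DiffClosed D F₁) (h2 : DiffClosed D F₂) : DiffClosed D (F₁ ⊔ F₂) := by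
  intro x hx
  have hle : F₁ ⊔ F₂ ≤ diffStab D hD (F₁ ⊔ F₂) := by
    apply sup_le
    · intro y hy
      exact ⟨SetLike.le_def.mp le_sup_left hy, SetLike.le_def.mp le_sup_left (h1 y hy)⟩
    · intro y hy
      exact ⟨SetLike.le_def.mp le_sup_right hy, SetLike.le_def.mp le_sup_right (h2 y hy)⟩
  exact (hle hx).2

end PVProof

section Part2

open PVGalois Polynomial Finset
namespace PVProof

variable {M : Type*} [Field M] {D : M → M}

lemma D_eval_const_coeffs (hD : IsDerivation D) {p : Polynomial M}
    (hpc : ∀ k, D (p.coeff k) = 0) (x : M) :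
    D (p.eval x) = (∑ k ∈ Finset.range p.natDegree, ((k : M) + 1) * p.coeff (k + 1) * x ^ k) * D x := by
  conv_lhs => rw [eval_eq_sum_range]
  rw [D_sum hD]
  have h1 : ∀ k ∈ Finset.range (p.natDegree + 1),
      D (p.coeff k * x ^ k) = p.coeff k * D (x ^ k) := by
    intro k _
    rw [hD.leibniz, hpc, zero_mul, add_zero]
  rw [Finset.sum_congr rfl h1, Finset.sum_range_succ']
  simp only [pow_zero, D_one hD, mul_zero, add_zero]
  rw [Finset.sum_mul]
  apply Finset.sum_congr rfl
  intro k _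
  rw [D_pow hD]
  ring

lemma D_eval_const_point (hD : IsDerivation D) {p : Polynomial M} {x : M} (hx : D x = 0) :
    D (p.eval x) = ∑ k ∈ Finset.range (p.natDegree + 1), D (p.coeff k) * x ^ k := by
  conv_lhs => rw [eval_eq_sum_range]
  rw [D_sum hD]
  apply Finset.sum_congr rfl
  intro k _
  rw [hD.leibniz]
  have hxk : D (x ^ k) = 0 := by
    cases k with
    | zero => simpa using D_one hD
    | succ j => rw [D_pow hD, hx, mul_zero]
  rw [hxk, mul_zero, zero_add]

lemma monomial_sum_coeff (n : ℕ) (f : ℕ → M) (j : ℕ) :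
    (∑ k ∈ Finset.range n, monomial k (f k)).coeff j =
      if j ∈ Finset.range n then f j else 0 := by
  rw [finset_sum_coeff]
  simp only [coeff_monomial]
  exact Finset.sum_ite_eq' (Finset.range n) j f

lemma monomial_sum_eval (n : ℕ) (f : ℕ → M) (x : M) :
    (∑ k ∈ Finset.range n, monomial k (f k)).eval x = ∑ k ∈ Finset.range n, f k * x ^ k := by
  rw [eval_finset_sum]
  apply Finset.sum_congr rfl
  intro k _
  rw [eval_monomial]

lemma monomial_sum_natDegree_le (n : ℕ) (f : ℕ → M) :
    (∑ k ∈ Finset.range (n + 1), monomial k (f k)).natDegree ≤ n := by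
  rw [Polynomial.natDegree_le_iff_coeff_eq_zero]
  intro j hj
  rw [monomial_sum_coeff]
  simp only [Finset.mem_range]
  rw [if_neg (by omega)]

/-- A root of a nonzero polynomial with constant coefficients is itself a constant. -/
lemma deriv_zero_of_const_poly (hD : IsDerivation D) [CharZero M] {x : M} :
    ∀ p : Polynomial M, p ≠ 0 → (∀ k, D (p.coeff k) = 0) → p.eval x = 0 → D x = 0 := by
  have aux : ∀ n : ℕ, ∀ p : Polynomial M, p.natDegree ≤ n → p ≠ 0 →
      (∀ k, D (p.coeff k) = 0) → p.eval x = 0 → D x = 0 := by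
    intro n
    induction n using Nat.strong_induction_on with
    | _ n ih =>
      intro p hdeg hp0 hpc hpx
      by_contra hDx
      have hn1 : 1 ≤ p.natDegree := by
        rcases Nat.eq_zero_or_pos p.natDegree with h0 | h
        · exfalso
          have hc := eq_C_of_natDegree_eq_zero h0
          rw [hc, eval_C] at hpx
          rw [hc, hpx, map_zero] at hp0
          exact hp0 rfl
        · exact h
      set n₀ := p.natDegree with hn₀
      set q : Polynomial M := ∑ k ∈ Finset.range n₀, monomial k (((k : M) + 1) * p.coeff (k + 1)) with hq
      have h0 : q.eval x * D x = 0 := by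
        rw [monomial_sum_eval]
        rw [← D_eval_const_coeffs hD hpc x, hpx, D_zero hD]
      have hqx : q.eval x = 0 := by
        rcases mul_eq_zero.mp h0 with h | h
        · exact h
        · exact absurd h hDx
      have hq0 : q ≠ 0 := by
        intro h
        have hco := monomial_sum_coeff n₀ (fun k => ((k : M) + 1) * p.coeff (k + 1)) (n₀ - 1)
        rw [← hq, h] at hco
        simp only [coeff_zero, Finset.mem_range] at hco
        rw [if_pos (by omega)] at hco
        have h1 : (n₀ - 1) + 1 = n₀ := by omega
        rw [h1] at hco
        have h2 : ((n₀ - 1 : ℕ) : M) + 1 ≠ 0 := by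
          have : (((n₀ - 1) + 1 : ℕ) : M) ≠ 0 := Nat.cast_ne_zero.mpr (by omega)
          push_cast at this
          exact this
        have h3 : p.coeff n₀ ≠ 0 := by
          rw [hn₀]
          exact Polynomial.leadingCoeff_ne_zero.mpr hp0
        exact (mul_ne_zero h2 h3) hco.symm
      have hqdeg : q.natDegree < n₀ := by
        have hle : q.natDegree ≤ n₀ - 1 := by
          rw [hq]
          have h1 : n₀ = (n₀ - 1) + 1 := by omega
          rw [h1]
          exact monomial_sum_natDegree_le _ _
        omega
      have hqck : ∀ k, D (q.coeff k) = 0 := by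
        intro k
        rw [hq, monomial_sum_coeff]
        split
        · have : ((k : M) + 1) = (((k + 1 : ℕ)) : M) := by push_cast; ring
          rw [hD.leibniz, hpc, mul_zero, zero_add, this, D_natCast hD, zero_mul]
        · exact D_zero hD
      exact hDx (ih q.natDegree (by omega) q le_rfl hq0 hqck hqx)
  intro p hp0 hpc hpx
  exact aux p.natDegree p le_rfl hp0 hpc hpx

/-- If a constant `x` is algebraic over a differential subfield `F`, it is a root of a
nonzero polynomial with coefficients in the constants of `F`. -/
lemma exists_const_poly_of_root (hD : IsDerivation D) {F : Subfield M} (hF : DiffClosed D F)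
    {x : M} (hx : D x = 0) :
    ∀ p : Polynomial M, p ≠ 0 → (∀ k, p.coeff k ∈ F) → p.eval x = 0 →
    ∃ r : Polynomial M, r ≠ 0 ∧ (∀ k, r.coeff k ∈ constantsOf D F) ∧ r.eval x = 0 := by
  have aux : ∀ n : ℕ, ∀ p : Polynomial M, p.natDegree ≤ n → p ≠ 0 →
      (∀ k, p.coeff k ∈ F) → p.eval x = 0 →
      ∃ r : Polynomial M, r ≠ 0 ∧ (∀ k, r.coeff k ∈ constantsOf D F) ∧ r.eval x = 0 := by
    intro n
    induction n using Nat.strong_induction_on with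
    | _ n ih =>
      intro p hdeg hp0 hpc hpx
      set p₁ := p * C p.leadingCoeff⁻¹ with hp₁
      have hmon : p₁.Monic := monic_mul_leadingCoeff_inv hp0
      have hp₁0 : p₁ ≠ 0 := hmon.ne_zero
      have hdeg₁ : p₁.natDegree = p.natDegree :=
        natDegree_eq_of_degree_eq (degree_mul_leadingCoeff_inv p hp0)
      have hpc₁ : ∀ k, p₁.coeff k ∈ F := by
        intro k
        rw [hp₁, coeff_mul_C]
        exact F.mul_mem (hpc k) (F.inv_mem (hpc p.natDegree))
      have hpx₁ : p₁.eval x = 0 := by rw [hp₁, eval_mul, hpx, zero_mul]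
      set n₀ := p₁.natDegree with hn₀
      set q : Polynomial M := ∑ k ∈ Finset.range (n₀ + 1), monomial k (D (p₁.coeff k)) with hq
      have hqcoeff : ∀ j, q.coeff j = if j ∈ Finset.range (n₀ + 1) then D (p₁.coeff j) else 0 :=
        fun j => monomial_sum_coeff _ _ j
      have hqx : q.eval x = 0 := by
        rw [hq, monomial_sum_eval, ← D_eval_const_point hD hx, hpx₁, D_zero hD]
      by_cases hq0 : q = 0
      · refine ⟨p₁, hp₁0, ?_, hpx₁⟩
        intro k
        refine ⟨hpc₁ k, ?_⟩
        by_cases hk : k ≤ n₀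
        · have := hqcoeff k
          rw [hq0] at this
          simp only [coeff_zero, Finset.mem_range] at this
          rw [if_pos (by omega)] at this
          exact this.symm
        · have : p₁.coeff k = 0 := coeff_eq_zero_of_natDegree_lt (by omega)
          rw [this]; exact D_zero hD
      · have hqtop : q.coeff n₀ = 0 := by
          rw [hqcoeff]
          rw [if_pos (Finset.mem_range.mpr (by omega))]
          rw [hmon.coeff_natDegree]
          exact D_one hD
        have hqle : q.natDegree ≤ n₀ := by rw [hq]; exact monomial_sum_natDegree_le _ _
        have hqdeg : q.natDegree < n₀ := by
          rcases lt_or_eq_of_le hqle with h | h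
          · exact h
          · exfalso
            have := Polynomial.leadingCoeff_ne_zero.mpr hq0
            rw [Polynomial.leadingCoeff, h, hqtop] at this
            exact this rfl
        have hqF : ∀ k, q.coeff k ∈ F := by
          intro k
          rw [hqcoeff]
          split
          · exact hF _ (hpc₁ k)
          · exact F.zero_mem
        exact ih q.natDegree (by omega) q le_rfl hq0 hqF hqx
  intro p hp0 hpc hpx
  exact aux p.natDegree p le_rfl hp0 hpc hpx

end PVProof
end Part2

section Part3

open PVGalois Polynomial Finset
namespace PVProof

variable {M : Type*} [Field M] {D : M → M}

lemma restrictPoly (F : Subfield M) (p : Polynomial M) (h : ∀ k, p.coeff k ∈ F) :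
    ∃ P : Polynomial F, P.map F.subtype = p := by
  refine ⟨∑ k ∈ Finset.range (p.natDegree + 1), monomial k (⟨p.coeff k, h k⟩ : F), ?_⟩
  ext j
  rw [coeff_map, finset_sum_coeff]
  simp only [coeff_monomial]
  rw [Finset.sum_ite_eq' (Finset.range (p.natDegree + 1)) j (fun k => (⟨p.coeff k, h k⟩ : F))]
  by_cases hj : j ∈ Finset.range (p.natDegree + 1)
  · rw [if_pos hj]; rfl
  · rw [if_neg hj]
    simp only [Finset.mem_range] at hj
    rw [coeff_eq_zero_of_natDegree_lt (by omega)]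
    simp

/-- A root in `M` of a nonzero polynomial with coefficients in an algebraically closed
subfield lies in that subfield. -/
lemma mem_of_root (Cb : Subfield M)
    (hclosed : ∀ p : Polynomial M, 0 < p.degree → (∀ k, p.coeff k ∈ Cb) → ∃ x ∈ Cb, p.eval x = 0)
    {x : M} {p : Polynomial M} (hp0 : p ≠ 0) (hpc : ∀ k, p.coeff k ∈ Cb) (hpx : p.eval x = 0) :
    x ∈ Cb := by
  haveI : IsAlgClosed Cb := by
    apply IsAlgClosed.of_exists_root
    intro P hPm hPi
    have hdeg : 0 < P.degree := by
      have := hPi.natDegree_pos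
      exact natDegree_pos_iff_degree_pos.mp this
    set q := P.map Cb.subtype with hqdef
    have hqdeg : 0 < q.degree := by
      rw [hqdef, degree_map_eq_of_injective Cb.subtype.injective]
      exact hdeg
    have hqc : ∀ k, q.coeff k ∈ Cb := by
      intro k
      rw [hqdef, coeff_map]
      exact SetLike.coe_mem _
    obtain ⟨y, hy, hyq⟩ := hclosed q hqdeg hqc
    refine ⟨⟨y, hy⟩, ?_⟩
    have h1 : Cb.subtype (P.eval ⟨y, hy⟩) = 0 := by
      rw [← eval₂_at_apply Cb.subtype]
      rw [eval₂_eq_eval_map]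
      exact hyq
    exact Cb.subtype.injective (by rw [h1, map_zero])
  obtain ⟨P, hPmap⟩ := restrictPoly Cb p hpc
  have hP0 : P ≠ 0 := by
    rintro rfl
    rw [Polynomial.map_zero] at hPmap
    exact hp0 hPmap.symm
  have hsplit : Splits P := IsAlgClosed.splits P
  have hroots : x ∈ p.roots := (mem_roots hp0).mpr hpx
  rw [← hPmap, hsplit.roots_map Cb.subtype] at hroots
  obtain ⟨y, _, rfl⟩ := Multiset.mem_map.mp hroots
  exact y.2

set_option synthInstance.maxHeartbeats 1000000 in
set_option maxHeartbeats 1000000 in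
/-- Elements of `L ⊔ Cb` are algebraic over `L`, provided every element of `Cb` is. -/
lemma sup_algebraic (L Cb : Subfield M)
    (halg : ∀ c ∈ Cb, ∃ p : Polynomial M, p ≠ 0 ∧ (∀ k, p.coeff k ∈ L) ∧ p.eval c = 0) :
    ∀ x ∈ (L ⊔ Cb : Subfield M),
      ∃ p : Polynomial M, p ≠ 0 ∧ (∀ k, p.coeff k ∈ L) ∧ p.eval x = 0 := by
  intro x hx
  have hAM : algebraMap L M = L.subtype := rfl
  set T : IntermediateField L M := IntermediateField.adjoin L (Cb : Set M) with hT
  have hint : ∀ c ∈ (Cb : Set M), IsIntegral L c := by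
    intro c hc
    obtain ⟨p, hp0, hpc, hpx⟩ := halg c hc
    obtain ⟨P, hPmap⟩ := restrictPoly L p hpc
    have hP0 : P ≠ 0 := by
      rintro rfl
      rw [Polynomial.map_zero] at hPmap
      exact hp0 hPmap.symm
    have : (Polynomial.aeval c) P = 0 := by
      rw [Polynomial.aeval_def, hAM, eval₂_eq_eval_map, hPmap]
      exact hpx
    exact IsAlgebraic.isIntegral ⟨P, hP0, this⟩
  haveI halgT : Algebra.IsAlgebraic L T := IntermediateField.isAlgebraic_adjoin hint
  have hxT : x ∈ T := by
    have hle : L ⊔ Cb ≤ T.toSubfield := by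
      apply sup_le
      · intro y hy
        exact T.algebraMap_mem ⟨y, hy⟩
      · intro y hy
        exact IntermediateField.subset_adjoin L (Cb : Set M) hy
    exact hle hx
  obtain ⟨P, hP0, hPev⟩ := halgT.isAlgebraic (⟨x, hxT⟩ : T)
  have hx0 : (Polynomial.aeval x) P = 0 := by
    have h1 : (algebraMap T M) (⟨x, hxT⟩ : T) = x := rfl
    rw [← h1, aeval_algebraMap_apply, hPev, map_zero]
  refine ⟨P.map L.subtype, Polynomial.map_ne_zero hP0, ?_, ?_⟩
  · intro k; rw [coeff_map]; exact SetLike.coe_mem _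
  · have h2 : eval x (P.map L.subtype) = (Polynomial.aeval x) P := by
      rw [Polynomial.aeval_def, hAM, eval₂_eq_eval_map]
    rw [h2, hx0]

end PVProof
end Part3

section Part4

open PVGalois Polynomial Finset
namespace PVProof

variable {M : Type*} [Field M] {D : M → M}

/-- Wronskian descent: an `F`-linear relation among the iterated derivatives of a family
in `F` yields a relation with coefficients in the constants of `F`. -/
lemma wronskian_descent (hD : IsDerivation D) {F : Subfield M} (hF : DiffClosed D F) :
    ∀ (k : ℕ) (v : Fin k → M), (∀ i, v i ∈ F) → ∀ c : Fin k → M, (∀ i, c i ∈ F) →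
      c ≠ 0 → (∀ j, j < k → ∑ i, c i * D^[j] (v i) = 0) →
      ∃ d : Fin k → M, (∀ i, d i ∈ constantsOf D F) ∧ d ≠ 0 ∧ ∑ i, d i * v i = 0 := by
  intro k
  induction k with
  | zero =>
    intro v _ c _ hcne _
    exact absurd (_root_.funext fun i => i.elim0) hcne
  | succ k ih =>
    intro v hv c hc hcne hrel
    obtain ⟨i0, hi0⟩ : ∃ i, c i ≠ 0 := by
      by_contra h
      push_neg at h
      exact hcne (_root_.funext h)
    set c' : Fin (k + 1) → M := fun i => c i / c i0 with hc'def
    have hc'mem : ∀ i, c' i ∈ F := fun i => F.div_mem (hc i) (hc i0)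
    have hc'i0 : c' i0 = 1 := div_self hi0
    have hrel' : ∀ j, j < k + 1 → ∑ i, c' i * D^[j] (v i) = 0 := by
      intro j hj
      have h1 : ∑ i, c' i * D^[j] (v i) = (∑ i, c i * D^[j] (v i)) / c i0 := by
        rw [Finset.sum_div]
        apply Finset.sum_congr rfl
        intro i _
        rw [hc'def]
        ring
      rw [h1, hrel j hj, zero_div]
    set e : Fin (k + 1) → M := fun i => D (c' i) with hedef
    have hei0 : e i0 = 0 := by rw [hedef]; simp only; rw [hc'i0]; exact D_one hD
    have hrel'' : ∀ j, j < k → ∑ i, e i * D^[j] (v i) = 0 := by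
      intro j hj
      have h1 := congrArg D (hrel' j (by omega))
      rw [D_sum hD, D_zero hD] at h1
      have h2 : ∀ i ∈ (Finset.univ : Finset (Fin (k + 1))),
          D (c' i * D^[j] (v i)) = e i * D^[j] (v i) + c' i * D^[j + 1] (v i) := by
        intro i _
        rw [hD.leibniz, ← Function.iterate_succ_apply' D]
        ring
      rw [Finset.sum_congr rfl h2, Finset.sum_add_distrib, hrel' (j + 1) (by omega), add_zero] at h1
      exact h1
    by_cases he : e = 0
    · refine ⟨c', fun i => ⟨hc'mem i, ?_⟩, ?_, ?_⟩
      · have := congrFun he i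
        simpa [hedef] using this
      · intro h
        rw [h] at hc'i0
        simp at hc'i0
      · have := hrel' 0 (by omega)
        simpa using this
    · obtain ⟨i1, hi1⟩ : ∃ i, e i ≠ 0 := by
        by_contra h
        push_neg at h
        exact he (_root_.funext h)
      have hi10 : i1 ≠ i0 := fun h => hi1 (h ▸ hei0)
      set v₁ : Fin k → M := v ∘ i0.succAbove with hv₁
      set c₁ : Fin k → M := e ∘ i0.succAbove with hc₁
      have hc₁ne : c₁ ≠ 0 := by
        obtain ⟨j1, hj1⟩ := Fin.exists_succAbove_eq hi10
        intro h
        have := congrFun h j1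
        rw [hc₁] at this
        simp only [Function.comp_apply, Pi.zero_apply] at this
        rw [hj1] at this
        exact hi1 this
      have hrel₁ : ∀ j, j < k → ∑ i, c₁ i * D^[j] (v₁ i) = 0 := by
        intro j hj
        have h1 := hrel'' j (by omega)
        rw [Fin.sum_univ_succAbove (fun i => e i * D^[j] (v i)) i0, hei0, zero_mul, zero_add] at h1
        exact h1
      obtain ⟨d₁, hd₁mem, hd₁ne, hd₁sum⟩ :=
        ih v₁ (fun i => hv _) c₁ (fun i => hF _ (hc'mem _)) hc₁ne hrel₁
      set d : Fin (k + 1) → M := Fin.insertNth (α := fun _ => M) i0 0 d₁ with hddef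
      refine ⟨d, ?_, ?_, ?_⟩
      · intro i
        rcases eq_or_ne i i0 with rfl | hne
        · rw [hddef, Fin.insertNth_apply_same]
          exact ⟨F.zero_mem, D_zero hD⟩
        · obtain ⟨j, rfl⟩ := Fin.exists_succAbove_eq hne
          rw [hddef, Fin.insertNth_apply_succAbove]
          exact hd₁mem j
      · intro h
        obtain ⟨j2, hj2⟩ : ∃ j, d₁ j ≠ 0 := by
          by_contra hcon
          push_neg at hcon
          exact hd₁ne (_root_.funext hcon)
        have := congrFun h (i0.succAbove j2)
        rw [hddef, Fin.insertNth_apply_succAbove] at this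
        exact hj2 this
      · have hsum := Fin.sum_univ_succAbove (fun i => d i * v i) i0
        rw [hddef, Fin.insertNth_apply_same, zero_mul, zero_add] at hsum
        rw [hsum]
        have h3 : ∀ j ∈ (Finset.univ : Finset (Fin k)),
            d (i0.succAbove j) * v (i0.succAbove j) = d₁ j * v₁ j := by
          intro j _
          rw [hddef, Fin.insertNth_apply_succAbove]
          rfl
        rw [Finset.sum_congr rfl h3]
        exact hd₁sum

end PVProof
end Part4

section Part5

open PVGalois Polynomial Finset
namespace PVProof

variable {M : Type*} [Field M] {D : M → M}

/-- A fundamental system which is independent over the constants of `E` is independent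
over arbitrary constants of the ambient field. -/
lemma linIndep_all_constants (hD : IsDerivation D) {E : Subfield M} (hEdc : DiffClosed D E)
    {m : ℕ} {η : Fin m → M} (hηE : ∀ t, η t ∈ E)
    (hlin : LinIndepOver (constantsOf D E) η) :
    LinIndepOver {x : M | D x = 0} η := by
  classical
  intro s c hcmem hsum i hi
  by_contra hne
  set s' := s.filter (fun t => c t ≠ 0) with hs'
  have hi' : i ∈ s' := Finset.mem_filter.mpr ⟨hi, hne⟩
  have hsum' : ∑ t ∈ s', c t * η t = 0 := by
    rw [hs', Finset.sum_filter_of_ne]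
    · exact hsum
    · intro t _ h hceq
      exact h (by rw [hceq, zero_mul])
  have hDc : ∀ t, D (c t) = 0 := fun t => hcmem t
  have hrelj : ∀ j : ℕ, ∑ t ∈ s', c t * D^[j] (η t) = 0 := by
    intro j
    induction j with
    | zero => simpa using hsum'
    | succ j ihj =>
      have h1 := congrArg D ihj
      rw [D_sum hD, D_zero hD] at h1
      have h2 : ∀ t ∈ s', D (c t * D^[j] (η t)) = c t * D^[j + 1] (η t) := by
        intro t _
        rw [hD.leibniz, hDc, zero_mul, add_zero, ← Function.iterate_succ_apply' D]
      rw [Finset.sum_congr rfl h2] at h1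
      exact h1
  set k := s'.card with hk
  set g : Fin k → Fin m := fun i2 => ((s'.equivFin.symm i2 : ↥s') : Fin m) with hg
  have hgmem : ∀ i2, g i2 ∈ s' := fun i2 => (s'.equivFin.symm i2).2
  have htrans : ∀ f : Fin m → M, ∑ i2 : Fin k, f (g i2) = ∑ t ∈ s', f t := by
    intro f
    rw [← Finset.sum_coe_sort s' f]
    exact Equiv.sum_comp s'.equivFin.symm (fun x : ↥s' => f ↑x)
  set A : Matrix (Fin k) (Fin k) E :=
    fun j i2 => ⟨D^[(j : ℕ)] (η (g i2)), iterate_mem hEdc (hηE _) _⟩ with hA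
  have hdet : (A.map E.subtype).det = 0 := by
    apply (Matrix.exists_mulVec_eq_zero_iff).mp
    refine ⟨fun i2 => c (g i2), ?_, ?_⟩
    · intro h0
      have h1 := congrFun h0 (s'.equivFin ⟨i, hi'⟩)
      simp only [Pi.zero_apply] at h1
      have hgi : g (s'.equivFin ⟨i, hi'⟩) = i := by
        rw [hg]; simp
      rw [hgi] at h1
      exact hne h1
    · funext j
      simp only [Matrix.mulVec, dotProduct, Matrix.map_apply, hA, Pi.zero_apply]
      have h2 : ∀ i2 ∈ (Finset.univ : Finset (Fin k)),
          E.subtype ⟨D^[(j : ℕ)] (η (g i2)), iterate_mem hEdc (hηE _) _⟩ * c (g i2)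
            = c (g i2) * D^[(j : ℕ)] (η (g i2)) := by
        intro i2 _
        simp [mul_comm]
      refine (Finset.sum_congr rfl h2).trans ?_
      rw [htrans (fun t => c t * D^[(j : ℕ)] (η t))]
      exact hrelj j
  have hdetE : A.det = 0 := by
    apply E.subtype.injective
    rw [RingHom.map_det]
    have : E.subtype.mapMatrix A = A.map E.subtype := rfl
    rw [this, hdet, map_zero]
  obtain ⟨dE, hdEne, hdE0⟩ := (Matrix.exists_mulVec_eq_zero_iff).mpr hdetE
  set cE : Fin k → M := fun i2 => (dE i2 : M) with hcE
  have hcEne : cE ≠ 0 := by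
    intro h
    apply hdEne
    funext i2
    have := congrFun h i2
    rw [hcE] at this
    exact Subtype.ext (by simpa using this)
  have hrelk : ∀ j, j < k → ∑ i2, cE i2 * D^[j] (η (g i2)) = 0 := by
    intro j hj
    have h1 := congrFun hdE0 ⟨j, hj⟩
    have h2 : ((∑ i2, A ⟨j, hj⟩ i2 * dE i2 : E) : M) = 0 := by
      have heq : A.mulVec dE ⟨j, hj⟩ = ∑ i2, A ⟨j, hj⟩ i2 * dE i2 := rfl
      rw [← heq, h1]; rfl
    push_cast at h2
    rw [← h2]
    apply Finset.sum_congr rfl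
    intro i2 _
    rw [hcE]
    exact mul_comm _ _
  obtain ⟨d₂, hd₂mem, hd₂ne, hd₂sum⟩ :=
    wronskian_descent hD hEdc k (fun i2 => η (g i2)) (fun i2 => hηE _) cE
      (fun i2 => SetLike.coe_mem _) hcEne hrelk
  have hginj : Function.Injective g := by
    intro a b hab
    apply s'.equivFin.symm.injective
    exact Subtype.ext hab
  set c₃ : Fin m → M := fun t => if h : ∃ i2, g i2 = t then d₂ h.choose else 0 with hc₃
  have hc₃g : ∀ i2, c₃ (g i2) = d₂ i2 := by
    intro i2
    rw [hc₃]
    simp only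
    have hex : ∃ i3, g i3 = g i2 := ⟨i2, rfl⟩
    rw [dif_pos hex]
    congr 1
    exact hginj hex.choose_spec
  have hc₃mem : ∀ t, c₃ t ∈ constantsOf D E := by
    intro t
    rw [hc₃]
    simp only
    split
    · exact hd₂mem _
    · exact ⟨E.zero_mem, D_zero hD⟩
  have hc₃sum : ∑ t ∈ s', c₃ t * η t = 0 := by
    rw [← htrans (fun t => c₃ t * η t)]
    have h4 : ∀ i2 ∈ (Finset.univ : Finset (Fin k)),
        c₃ (g i2) * η (g i2) = d₂ i2 * η (g i2) := by
      intro i2 _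
      rw [hc₃g]
    rw [Finset.sum_congr rfl h4]
    exact hd₂sum
  obtain ⟨j2, hj2⟩ : ∃ j2, d₂ j2 ≠ 0 := by
    by_contra hcon
    push_neg at hcon
    exact hd₂ne (funext hcon)
  have hfin := hlin s' c₃ hc₃mem hc₃sum (g j2) (hgmem j2)
  rw [hc₃g] at hfin
  exact hj2 hfin

end PVProof
end Part5

/-- Let `L|K` be Picard-Vessiot, `Cb` an algebraic closure of the
constants `C` of `K`, and `E` an intermediate differential field such that `E|K` is a
Picard-Vessiot extension.  Then `Ē = E ⊔ Cb` is a Picard-Vessiot extension of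
`K̄ = K ⊔ Cb`. -/
theorem statement_14 {M : Type*} [Field M] [CharZero M] (D : M → M) (hD : IsDerivation D)
    (K L : Subfield M) (hKdc : DiffClosed D K) (hKL : K ≤ L)
    (n : ℕ) (a : Fin n → M) (hPV : IsPicardVessiot D K L n a)
    (Cb : Subfield M) (hCb : IsAlgClosureOf (constantsOf D K) Cb)
    (E : Subfield M) (hKE : K ≤ E) (hEL : E ≤ L) (hEdc : DiffClosed D E)
    (m : ℕ) (b : Fin m → M) (hPVE : IsPicardVessiot D K E m b) :
    IsPicardVessiot D (K ⊔ Cb) (E ⊔ Cb) m b := by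
  classical
  obtain ⟨ηL, hηL⟩ := hPV
  have hLdc : DiffClosed D L := hηL.2.2.2.1.2.2.1
  have hCLK : constantsOf D L = constantsOf D K := hηL.2.2.2.2
  obtain ⟨η, hbK, hsol, hlin, hgen, hCE⟩ := hPVE
  have hηE : ∀ t, η t ∈ E := fun t => hgen.2.1 ⟨t, rfl⟩
  have hCbconst : ∀ c ∈ Cb, D c = 0 := by
    intro c hc
    obtain ⟨p, hp0, hpc, hpx⟩ := hCb.2.1 c hc
    exact PVProof.deriv_zero_of_const_poly hD p hp0 (fun k2 => (hpc k2).2) hpx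
  have hCbdc : DiffClosed D Cb := fun x hx => by
    rw [hCbconst x hx]; exact Cb.zero_mem
  have hEsupdc : DiffClosed D (E ⊔ Cb) := PVProof.diffClosed_sup hD hEdc hCbdc
  have hconstEb : ∀ x ∈ constantsOf D (E ⊔ Cb), x ∈ Cb := by
    rintro x ⟨hxmem, hxD⟩
    have hxL : x ∈ (L ⊔ Cb : Subfield M) := sup_le_sup_right hEL Cb hxmem
    have halgLc : ∀ c ∈ Cb, ∃ p : Polynomial M,
        p ≠ 0 ∧ (∀ k2, p.coeff k2 ∈ L) ∧ p.eval c = 0 := by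
      intro c hc
      obtain ⟨p, hp0, hpc, hpx⟩ := hCb.2.1 c hc
      exact ⟨p, hp0, fun k2 => hKL ((hpc k2).1), hpx⟩
    obtain ⟨p, hp0, hpc, hpx⟩ := PVProof.sup_algebraic L Cb halgLc x hxL
    obtain ⟨r, hr0, hrc, hrx⟩ := PVProof.exists_const_poly_of_root hD hLdc hxD p hp0 hpc hpx
    apply PVProof.mem_of_root Cb hCb.2.2 hr0 ?_ hrx
    intro k2
    apply hCb.1
    rw [← hCLK]
    exact hrc k2
  have hCeq : constantsOf D (E ⊔ Cb) = constantsOf D (K ⊔ Cb) := by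
    apply Set.Subset.antisymm
    · rintro x hx
      exact ⟨SetLike.le_def.mp le_sup_right (hconstEb x hx), hx.2⟩
    · rintro x ⟨hm, hd⟩
      exact ⟨SetLike.le_def.mp (sup_le_sup_right hKE Cb) hm, hd⟩
  refine ⟨η, fun i => SetLike.le_def.mp le_sup_left (hbK i), hsol, ?_, ?_, hCeq⟩
  · intro s c hcmem hsum i hi
    exact PVProof.linIndep_all_constants hD hEdc hηE hlin s c (fun i2 => (hcmem i2).2) hsum i hi
  · refine ⟨sup_le_sup_right hKE Cb, ?_, hEsupdc, ?_⟩
    · intro y hy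
      obtain ⟨t, rfl⟩ := hy
      exact SetLike.le_def.mp le_sup_left (hηE t)
    · intro F hKF hηF hFdc
      apply sup_le
      · exact hgen.2.2.2 F (le_trans le_sup_left hKF) hηF hFdc
      · exact le_trans le_sup_right hKF
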